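/- Let X be a Lindelöf space such that the Gδ-topology Xδ on X is also Lindelöf. Then X is exponentially separable. -/
import Mathlib


/-- A space is exponentially separable. -/
def ExpSep (X : Type*) [TopologicalSpace X] : Prop :=
  ∀ F : Set (Set X), F.Countable → (∀ C ∈ F, IsClosed C) →
    ∃ A : Set X, A.Countable ∧ ∀ G ⊆ F, (⋂₀ G).Nonempty → (A ∩ ⋂₀ G).Nonempty

theorem stmt9 (X : Type*) [TopologicalSpace X] [LindelofSpace X]
    (h : @LindelofSpace X (TopologicalSpace.generateFrom {s : Set X | IsGδ s})) :
    ExpSep X := by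
  intro F hFc hFcl
  -- For each x, the Gδ set of points belonging to every C ∈ F that contains them... 
  set U : X → Set X := fun x => ⋂ C ∈ {C ∈ F | x ∉ C}, Cᶜ with hU
  have hUGδ : ∀ x, IsGδ (U x) := by
    intro x
    apply IsGδ.biInter (hFc.mono (Set.sep_subset _ _))
    intro C hC
    exact ((hFcl C hC.1).isOpen_compl).isGδ
  have hUopen : ∀ x, @IsOpen X (TopologicalSpace.generateFrom {s : Set X | IsGδ s}) (U x) := fun x =>
    TopologicalSpace.GenerateOpen.basic _ (by exact hUGδ x)
  have hxU : ∀ x, x ∈ U x := by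
    intro x
    simp only [hU, Set.mem_iInter]
    intro C hC
    exact hC.2
  have hLin : @IsLindelof X (TopologicalSpace.generateFrom {s : Set X | IsGδ s}) Set.univ := @isLindelof_univ X (TopologicalSpace.generateFrom {s : Set X | IsGδ s}) h
  obtain ⟨A, hAc, hAcov⟩ := @IsLindelof.elim_countable_subcover X (TopologicalSpace.generateFrom {s : Set X | IsGδ s}) _ X hLin U hUopen
    (fun x _ => Set.mem_iUnion.2 ⟨x, hxU x⟩)
  refine ⟨A, hAc, ?_⟩
  intro G hGF ⟨y, hy⟩
  have := hAcov (Set.mem_univ y)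
  simp only [Set.mem_iUnion] at this
  obtain ⟨a, haA, hyUa⟩ := this
  refine ⟨a, haA, ?_⟩
  intro C hCG
  by_contra haC
  have : y ∈ Cᶜ := by
    simp only [hU, Set.mem_iInter] at hyUa
    exact hyUa C ⟨hGF hCG, haC⟩
  exact this (hy C hCG)
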